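/- Let α ≥ 2 be a cardinal and κ an infinite cardinal. Then: (b) if κ is regular, then (α^{<κ})^{<κ} = α^{<κ}; (c) if κ is singular, then (α^{<κ})^{<κ} = α^κ; and (d) in all cases ((α^{<κ})^{<κ})^{<κ} = (α^{<κ})^{<κ}. -/

import Mathlib

open Cardinal TopologicalSpace Set

universe u

namespace PowerltAux

variable {α κ : Cardinal.{u}}

lemma aleph0_le_plt (hα : 2 ≤ α) (hκ : ℵ₀ ≤ κ) : ℵ₀ ≤ α ^< κ := by
  rw [aleph0_le]
  intro n
  have h1 : (n : Cardinal) < 2 ^ (n : Cardinal) := cantor _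
  have h2 : (2 : Cardinal) ^ (n : Cardinal) ≤ α ^ (n : Cardinal) := power_le_power_right hα
  have h3 : α ^ (n : Cardinal) ≤ α ^< κ := le_powerlt α ((nat_lt_aleph0 n).trans_le hκ)
  exact (h1.le.trans h2).trans h3

lemma kappa_le_plt (hα : 2 ≤ α) (hκ : ℵ₀ ≤ κ) : κ ≤ α ^< κ := by
  by_contra h
  push_neg at h
  have h1 : α ^< κ < 2 ^ (α ^< κ) := cantor _
  have h2 : (2 : Cardinal) ^ (α ^< κ) ≤ α ^ (α ^< κ) := power_le_power_right hα
  have h3 : α ^ (α ^< κ) ≤ α ^< κ := le_powerlt α h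
  exact absurd ((h1.trans_le h2).trans_le h3) (lt_irrefl _)

lemma exists_le_of_lt_plt {c : Cardinal.{u}} (h : c < α ^< κ) : ∃ x < κ, c ≤ α ^ x := by
  by_contra h'
  push_neg at h'
  exact h.not_ge (powerlt_le.2 fun x hx => (h' x hx).le)

lemma closure (hκ : ℵ₀ ≤ κ) {c μ : Cardinal.{u}} (hc : c < α ^< κ) (hμ : μ < κ) :
    c ^ μ ≤ α ^< κ := by
  obtain ⟨x, hx, hcx⟩ := exists_le_of_lt_plt hc
  calc c ^ μ ≤ (α ^ x) ^ μ := power_le_power_right hcx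
    _ = α ^ (x * μ) := power_mul.symm
    _ ≤ α ^< κ := le_powerlt α (mul_lt_of_lt hκ hx hμ)

lemma pow_le_of_cof {m μ : Cardinal.{u}} (hm : ℵ₀ ≤ m) (hcof : μ < m.ord.cof)
    (H : ∀ c < m, c ^ μ ≤ m) : m ^ μ ≤ m := by
  haveI : IsWellOrder m.ord.ToType (· < ·) := isWellOrder_lt
  have hmT : #m.ord.ToType = m := by rw [Cardinal.mk_toType, card_ord]
  have hμout : #(μ.out) = μ := mk_out μ
  have hlim : Order.IsSuccLimit m.ord := isSuccLimit_ord hm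
  have key : ∀ f : μ.out → m.ord.ToType, ∃ b : m.ord.ToType, ∀ i, f i < b := by
    intro f
    have hs : (⨆ i, Order.succ (Ordinal.typein (α := m.ord.ToType) (· < ·) (f i))) < m.ord := by
      apply Ordinal.iSup_lt_ord
      · rwa [hμout]
      · intro i
        exact hlim.succ_lt (Ordinal.typein_lt_self (f i))
    refine ⟨Ordinal.enum (α := m.ord.ToType) (· < ·) ⟨_, by rwa [Ordinal.type_toType]⟩,
      fun i => ?_⟩
    rw [← Ordinal.typein_lt_typein (α := m.ord.ToType) (· < ·)]
    refine lt_of_lt_of_eq ?_ (Ordinal.typein_enum _ _).symm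
    exact (Order.lt_succ _).trans_le (le_ciSup (Ordinal.bddAbove_range _) i)
  have cover : (Set.univ : Set (μ.out → m.ord.ToType)) ⊆
      ⋃ b : m.ord.ToType, {f : μ.out → m.ord.ToType | ∀ i, f i < b} := by
    intro f _
    obtain ⟨b, hb⟩ := key f
    exact Set.mem_iUnion.2 ⟨b, hb⟩
  have step1 : m ^ μ ≤ sum fun b : m.ord.ToType =>
      #({f : μ.out → m.ord.ToType | ∀ i, f i < b}) := by
    have he := power_def m.ord.ToType μ.out
    rw [hmT, hμout] at he
    rw [he]
    calc #(μ.out → m.ord.ToType) = #(Set.univ : Set (μ.out → m.ord.ToType)) := mk_univ.symm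
      _ ≤ #(⋃ b : m.ord.ToType, {f : μ.out → m.ord.ToType | ∀ i, f i < b}) :=
        mk_le_mk_of_subset cover
      _ ≤ _ := mk_iUnion_le_sum_mk
  have step2 : ∀ b : m.ord.ToType, #({f : μ.out → m.ord.ToType | ∀ i, f i < b}) ≤ m := by
    intro b
    have h1 : #({f : μ.out → m.ord.ToType | ∀ i, f i < b}) ≤ #(μ.out → Iio b) := by
      apply mk_le_of_injective
        (f := fun g : {f : μ.out → m.ord.ToType | ∀ i, f i < b} =>
          fun i => (⟨g.1 i, g.2 i⟩ : Iio b))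
      intro g g' h
      apply Subtype.ext
      funext i
      exact congrArg Subtype.val (congrFun h i)
    have h2 := power_def (Iio b) μ.out
    rw [hμout] at h2
    exact h1.trans (h2 ▸ H _ (Cardinal.mk_Iio_ord_toType b))
  calc m ^ μ ≤ _ := step1
    _ ≤ sum (fun _ : m.ord.ToType => m) := sum_le_sum _ _ step2
    _ = #m.ord.ToType * m := sum_const' _ m
    _ = m := by rw [hmT, mul_eq_self hm]

lemma cof_ge (hα : 2 ≤ α) (hκ : ℵ₀ ≤ κ) (hreg : κ.IsRegular)
    (hB : ∀ x < κ, α ^ x < α ^< κ) : κ ≤ (α ^< κ).ord.cof := by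
  have hα0 : α ≠ 0 := by positivity
  by_contra h
  push_neg at h
  obtain ⟨ι, f, hlsub, hι⟩ := Ordinal.exists_lsub_cof (α ^< κ).ord
  have hικ : #ι < κ := by rw [hι]; exact h
  have hfi : ∀ i, (f i).card < α ^< κ := fun i =>
    Cardinal.lt_ord.1 (hlsub ▸ Ordinal.lt_lsub f i)
  choose g hg hg' using fun i => exists_le_of_lt_plt (hfi i)
  have hsup : (⨆ i, g i) < κ := by
    apply Ordinal.iSup_lt _ hg
    rwa [hreg.cof_eq]
  have hν : α ^ (⨆ i, g i) < α ^< κ := hB _ hsup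
  have hνm : Order.succ (α ^ ⨆ i, g i) ≤ α ^< κ := Order.succ_le_of_lt hν
  have hlt : ∀ i, f i < (Order.succ (α ^ ⨆ i, g i)).ord := by
    intro i
    rw [Cardinal.lt_ord]
    exact lt_of_le_of_lt
      ((hg' i).trans (power_le_power_left hα0 (le_ciSup (Cardinal.bddAbove_range _) i)))
      (Order.lt_succ _)
  rcases lt_or_eq_of_le hνm with hlt2 | heq
  · have hle : (α ^< κ).ord ≤ (Order.succ (α ^ ⨆ i, g i)).ord := hlsub ▸ Ordinal.lsub_le hlt
    exact absurd (hle.trans_lt (ord_lt_ord.2 hlt2)) (lt_irrefl _)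
  · have hinf : ℵ₀ ≤ α ^ (⨆ i, g i) := by
      by_contra h'
      push_neg at h'
      obtain ⟨n, hn⟩ := lt_aleph0.1 h'
      have h1 : Order.succ (α ^ ⨆ i, g i) < ℵ₀ := by
        rw [hn, Cardinal.succ_natCast]
        exact_mod_cast nat_lt_aleph0 (n + 1)
      rw [heq] at h1
      exact absurd h1 (not_lt.2 (aleph0_le_plt hα hκ))
    have hregm : (α ^< κ).IsRegular := heq ▸ isRegular_succ hinf
    have h2 : κ ≤ (α ^< κ).ord.cof := by rw [hregm.cof_eq]; exact kappa_le_plt hα hκ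
    exact h.not_ge h2

lemma part_b (hα : 2 ≤ α) (hκ : ℵ₀ ≤ κ) (hreg : κ.IsRegular) :
    (α ^< κ) ^< κ = α ^< κ := by
  apply le_antisymm
  · rw [powerlt_le]
    intro μ hμ
    rcases eq_or_ne μ 0 with rfl | hμ0
    · rw [power_zero]
      exact one_le_aleph0.trans (aleph0_le_plt hα hκ)
    by_cases hB : ∀ x < κ, α ^ x < α ^< κ
    · exact pow_le_of_cof (aleph0_le_plt hα hκ)
        (hμ.trans_le (cof_ge hα hκ hreg hB)) (fun c hc => closure hκ hc hμ)
    · push_neg at hB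
      obtain ⟨x, hx, hxe⟩ := hB
      calc (α ^< κ) ^ μ ≤ (α ^ x) ^ μ := power_le_power_right hxe
        _ = α ^ (x * μ) := power_mul.symm
        _ ≤ α ^< κ := le_powerlt α (mul_lt_of_lt hκ hx hμ)
  · simpa [power_one] using le_powerlt (α ^< κ) (one_lt_aleph0.trans_le hκ)

lemma pow_plt (hκ : ℵ₀ ≤ κ) {a : Cardinal.{u}} (ha : a ≠ 0) : (a ^ κ) ^< κ = a ^ κ := by
  apply le_antisymm
  · rw [powerlt_le]
    intro μ hμ
    rcases eq_or_ne μ 0 with rfl | hμ0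
    · rw [power_zero]
      exact Cardinal.one_le_iff_ne_zero.2 (power_ne_zero κ ha)
    · rw [← power_mul, mul_eq_left hκ hμ.le hμ0]
  · simpa [power_one] using le_powerlt (a ^ κ) (one_lt_aleph0.trans_le hκ)

lemma part_c (hα : 2 ≤ α) (hκ : ℵ₀ ≤ κ) (hsing : ¬κ.IsRegular) :
    (α ^< κ) ^< κ = α ^ κ := by
  have hα0 : α ≠ 0 := by positivity
  have hplt : α ^< κ ≤ α ^ κ := powerlt_le.2 fun x hx => power_le_power_left hα0 hx.le
  apply le_antisymm
  · rw [powerlt_le]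
    intro μ hμ
    rcases eq_or_ne μ 0 with rfl | hμ0
    · rw [power_zero]
      exact Cardinal.one_le_iff_ne_zero.2 (power_ne_zero κ hα0)
    · calc (α ^< κ) ^ μ ≤ (α ^ κ) ^ μ := power_le_power_right hplt
        _ = α ^ (κ * μ) := power_mul.symm
        _ = α ^ κ := by rw [mul_eq_left hκ hμ.le hμ0]
  · obtain ⟨ι, f, hlsub, hι⟩ := Ordinal.exists_lsub_cof κ.ord
    have hικ : #ι < κ := by
      rw [hι]
      exact lt_of_le_of_ne (Ordinal.cof_ord_le κ) (fun hc => hsing ⟨hκ, hc.ge⟩)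
    have hκle : κ ≤ sum fun i => (Order.succ (f i)).card := by
      have h1 : κ.ord ≤ ⨆ i, Order.succ (f i) := by
        rw [← hlsub]
        exact Ordinal.lsub_le fun i =>
          (Order.lt_succ _).trans_le (le_ciSup (Ordinal.bddAbove_range _) i)
      calc κ = κ.ord.card := (card_ord κ).symm
        _ ≤ (⨆ i, Order.succ (f i)).card := Ordinal.card_le_card h1
        _ ≤ _ := Ordinal.card_iSup_le_sum_card _
    have hsucc : ∀ i, (Order.succ (f i)).card < κ := by
      intro i
      rw [← Cardinal.lt_ord]
      exact (isSuccLimit_ord hκ).succ_lt (hlsub ▸ Ordinal.lt_lsub f i)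
    calc α ^ κ ≤ α ^ (sum fun i => (Order.succ (f i)).card) := power_le_power_left hα0 hκle
      _ = prod fun i => α ^ (Order.succ (f i)).card := power_sum α _
      _ ≤ prod fun _ : ι => α ^< κ := prod_le_prod _ _ fun i => le_powerlt α (hsucc i)
      _ = (α ^< κ) ^ #ι := prod_const' ι _
      _ ≤ (α ^< κ) ^< κ := le_powerlt _ hικ

end PowerltAux

theorem stmt0 (α κ : Cardinal.{u}) (hα : 2 ≤ α) (hκ : ℵ₀ ≤ κ) :
    (κ.IsRegular → (α ^< κ) ^< κ = α ^< κ) ∧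
    (¬κ.IsRegular → (α ^< κ) ^< κ = α ^ κ) ∧
    ((α ^< κ) ^< κ) ^< κ = (α ^< κ) ^< κ := by
  have hα0 : α ≠ 0 := by positivity
  refine ⟨PowerltAux.part_b hα hκ, PowerltAux.part_c hα hκ, ?_⟩
  by_cases hreg : κ.IsRegular
  · rw [PowerltAux.part_b hα hκ hreg, PowerltAux.part_b hα hκ hreg]
  · rw [PowerltAux.part_c hα hκ hreg]
    exact PowerltAux.pow_plt hκ hα0
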